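/- Let K be a commutative ring and v, w : ℕ → K. With A^{v,w}(n,k) defined by the recurrence A^{v,w}(n,k) = A^{v,w}(n-1,k-1) + (v_{n-1}+w_k)·A^{v,w}(n-1,k) and standard initial conditions, the orthogonality relation ∑_{k=m}^{n} A^{v,w}(n,k) · A^{-w,-v}(k,m) = δ_{n,m} holds for all m ≤ n, where A^{-w,-v} is defined by the same recurrence with weight functions (-w, -v). -/
import Mathlib


open Finset

/-- The generalized two-weight array `A^{v,w}(n,k)`. -/
def A {K : Type*} [CommRing K] (v w : ℕ → K) : ℕ → ℕ → K
  | 0, 0 => 1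
  | 0, _ + 1 => 0
  | n + 1, 0 => (v n + w 0) * A v w n 0
  | n + 1, k + 1 => A v w n k + (v n + w (k + 1)) * A v w n (k + 1)

lemma A_eq_zero {K : Type*} [CommRing K] (v w : ℕ → K) :
    ∀ n k, n < k → A v w n k = 0 := by
  intro n
  induction n with
  | zero =>
    intro k hk
    match k, hk with
    | k + 1, _ => rfl
  | succ n ih =>
    intro k hk
    match k, hk with
    | k + 1, hk =>
      show A v w n k + (v n + w (k + 1)) * A v w n (k + 1) = 0
      rw [ih k (by omega), ih (k + 1) (by omega)]
      ring

lemma key_orth {K : Type*} [CommRing K] (v w : ℕ → K) :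
    ∀ n m, ∑ k ∈ Finset.range (n + 1),
        A v w n k * A (fun i => -w i) (fun i => -v i) k m =
      if n = m then 1 else 0 := by
  intro n
  induction n with
  | zero =>
    intro m
    cases m with
    | zero => simp [A]
    | succ m => simp [A]
  | succ n ih =>
    intro m
    set B := A (fun i => -w i) (fun i => -v i) with hB
    have hAz : A v w n (n + 1) = 0 := A_eq_zero v w n (n + 1) (by omega)
    have e1 : ∑ k ∈ Finset.range (n + 2), A v w (n + 1) k * B k m
        = (∑ k ∈ Finset.range (n + 1), A v w n k * B (k + 1) m)
          + ∑ k ∈ Finset.range (n + 1), (v n + w k) * (A v w n k * B k m) := by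
      rw [Finset.sum_range_succ']
      have e2 : ∑ k ∈ Finset.range (n + 2), (v n + w k) * (A v w n k * B k m)
          = ∑ k ∈ Finset.range (n + 1), (v n + w k) * (A v w n k * B k m) := by
        rw [Finset.sum_range_succ, hAz]; ring
      rw [← e2, Finset.sum_range_succ' (fun k => (v n + w k) * (A v w n k * B k m)),
        ← add_assoc, ← Finset.sum_add_distrib]
      congr 1
      · apply Finset.sum_congr rfl
        intro k _
        show (A v w n k + (v n + w (k + 1)) * A v w n (k + 1)) * B (k + 1) m = _
        ring
      · show (v n + w 0) * A v w n 0 * B 0 m = _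
        ring
    rw [e1]
    cases m with
    | zero =>
      have e3 : (∑ k ∈ Finset.range (n + 1), A v w n k * B (k + 1) 0)
          + ∑ k ∈ Finset.range (n + 1), (v n + w k) * (A v w n k * B k 0)
          = (v n - v 0) * ∑ k ∈ Finset.range (n + 1), A v w n k * B k 0 := by
        rw [Finset.mul_sum, ← Finset.sum_add_distrib]
        apply Finset.sum_congr rfl
        intro k _
        show A v w n k * ((-w k + -v 0) * B k 0) + _ = _
        ring
      rw [e3, ih 0]
      rcases eq_or_ne n 0 with h | h <;> simp [h]
    | succ m =>
      have e3 : (∑ k ∈ Finset.range (n + 1), A v w n k * B (k + 1) (m + 1))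
          + ∑ k ∈ Finset.range (n + 1), (v n + w k) * (A v w n k * B k (m + 1))
          = (∑ k ∈ Finset.range (n + 1), A v w n k * B k m)
            + (v n - v (m + 1)) *
              ∑ k ∈ Finset.range (n + 1), A v w n k * B k (m + 1) := by
        rw [Finset.mul_sum, ← Finset.sum_add_distrib, ← Finset.sum_add_distrib]
        apply Finset.sum_congr rfl
        intro k _
        show A v w n k * (B k m + (-w k + -v (m + 1)) * B k (m + 1)) + _ = _
        ring
      rw [e3, ih m, ih (m + 1)]
      rcases eq_or_ne n m with rfl | h
      · simp [Nat.succ_ne_succ, (by omega : n ≠ n + 1)]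
      · rcases eq_or_ne n (m + 1) with rfl | h2
        · simp [h]
        · simp [h, h2, (by omega : n + 1 ≠ m + 1)]

theorem stmt_3 {K : Type*} [CommRing K] (v w : ℕ → K) (n m : ℕ) (hmn : m ≤ n) :
    ∑ k ∈ Finset.Icc m n, A v w n k * A (fun i => -w i) (fun i => -v i) k m =
      if n = m then 1 else 0 := by
  have hsub : Finset.Icc m n ⊆ Finset.range (n + 1) := by
    intro k hk
    simp only [Finset.mem_Icc] at hk
    simp only [Finset.mem_range]
    omega
  have hzero : ∀ k ∈ Finset.range (n + 1), k ∉ Finset.Icc m n →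
      A v w n k * A (fun i => -w i) (fun i => -v i) k m = 0 := by
    intro k hk hk'
    simp only [Finset.mem_Icc] at hk'
    simp only [Finset.mem_range] at hk
    have hkm : k < m := by omega
    rw [A_eq_zero _ _ k m hkm, mul_zero]
  rw [Finset.sum_subset hsub hzero]
  exact key_orth v w n m
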